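/- Every triangulation of the punctured (n,∞)-gon P_{n,∞} contains infinitely many tagged edges. -/

import Mathlib

/-!
STATEMENT 5: Every triangulation of the punctured `(n,∞)`-gon `P_{n,∞}` contains
infinitely many tagged edges.  Lines are indexed by `Fin (n+1)`, covering all `n ≥ 1`.
-/

namespace PuncturedGon

/-- An (unconstrained) edge datum of the punctured `(n+1,∞)`-gon. -/
structure Edge (n : ℕ) where
  p : Fin (n + 1) × ℤ
  q : Fin (n + 1) × ℤ
  sgn : ℤ

/-- `E` is a tagged edge: `q ≠ (p₁, p₂ + 1)`, the sign is `±1`, and the sign is `+1`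
whenever the two endpoints are distinct. -/
def IsTagged {n : ℕ} (E : Edge n) : Prop :=
  E.q ≠ (E.p.1, E.p.2 + 1) ∧ (E.sgn = 1 ∨ E.sgn = -1) ∧ (E.p ≠ E.q → E.sgn = 1)

/-- `σ(a) = 1/2 + a/(2(1+|a|)) ∈ (0,1)`. -/
noncomputable def sig (a : ℤ) : ℝ := 1 / 2 + (a : ℝ) / (2 * (1 + |(a : ℝ)|))

/-- The embedding of the marked points into the circle `ℝ/ℤ`
(the `h`-th line, `h : Fin (n+1)`, occupies the arc `[h/(n+1), (h+1)/(n+1)]`). -/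
noncomputable def theta (n : ℕ) (p : Fin (n + 1) × ℤ) : ℝ :=
  ((p.1.val : ℝ) + sig p.2) / (n + 1)

/-- `(x, y)` is a lift of the edge `E` (with distinct endpoints): `x ≡ θ(E.p)` and
`y ≡ θ(E.q)` modulo `1`, with `y ∈ (x, x + 1)`. -/
def IsLift {n : ℕ} (E : Edge n) (x y : ℝ) : Prop :=
  (∃ k : ℤ, x = theta n E.p + k) ∧ (∃ k : ℤ, y = theta n E.q + k) ∧ x < y ∧ y < x + 1

/-- `E` crosses `F`. -/
def Crosses {n : ℕ} (E F : Edge n) : Prop :=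
  (E.p ≠ E.q ∧ F.p ≠ F.q ∧ ∃ x₁ y₁ x₂ y₂ : ℝ,
    IsLift E x₁ y₁ ∧ IsLift F x₂ y₂ ∧
    ((x₁ < x₂ ∧ x₂ < y₁ ∧ y₁ < y₂) ∨ (x₂ < x₁ ∧ x₁ < y₂ ∧ y₂ < y₁))) ∨
  (E.p ≠ E.q ∧ F.p = F.q ∧ ∃ x y t : ℝ,
    IsLift E x y ∧ (∃ k : ℤ, t = theta n F.p + k) ∧ x < t ∧ t < y) ∨
  (E.p = E.q ∧ F.p ≠ F.q ∧ ∃ x y t : ℝ,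
    IsLift F x y ∧ (∃ k : ℤ, t = theta n E.p + k) ∧ x < t ∧ t < y) ∨
  (E.p = E.q ∧ F.p = F.q ∧ E.p ≠ F.p ∧ E.sgn ≠ F.sgn)

/-- A set of edges is pairwise non-crossing. -/
def PairwiseNoncrossing {n : ℕ} (T : Set (Edge n)) : Prop :=
  ∀ E ∈ T, ∀ F ∈ T, ¬ Crosses E F

/-- A triangulation of `P_{n+1,∞}`: a maximal set of pairwise non-crossing tagged
edges. -/
def IsTriangulation {n : ℕ} (T : Set (Edge n)) : Prop :=
  (∀ E ∈ T, IsTagged E) ∧ PairwiseNoncrossing T ∧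
    ∀ E : Edge n, IsTagged E → E ∉ T → ∃ F ∈ T, Crosses E F

end PuncturedGon

namespace PuncturedGon

lemma sig_eq (a : ℤ) : sig a = (1 + |(a:ℝ)| + a) / (2 * (1 + |(a:ℝ)|)) := by
  have h : (0:ℝ) < 1 + |(a:ℝ)| := by positivity
  rw [sig]; field_simp

lemma sig_pos (a : ℤ) : 0 < sig a := by
  rw [sig_eq]
  apply div_pos _ (by positivity)
  have := neg_abs_le (a:ℝ); linarith

lemma sig_lt_one (a : ℤ) : sig a < 1 := by
  rw [sig_eq, div_lt_one (by positivity)]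
  have := le_abs_self (a:ℝ); linarith

lemma sig_strict {a b : ℤ} (h : a < b) : sig a < sig b := by
  rw [sig_eq, sig_eq, div_lt_div_iff₀ (by positivity) (by positivity)]
  have h' : (a:ℝ) < b := by exact_mod_cast h
  rcases abs_cases (a:ℝ) with ⟨h1,h2⟩|⟨h1,h2⟩ <;> rcases abs_cases (b:ℝ) with ⟨h3,h4⟩|⟨h3,h4⟩ <;>
    rw [h1, h3] <;> nlinarith

lemma sig_lt_sig_iff {a b : ℤ} : sig a < sig b ↔ a < b := by
  constructor
  · intro h; by_contra hc; push_neg at hc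
    rcases eq_or_lt_of_le hc with h'|h'
    · rw [h'] at h; exact lt_irrefl _ h
    · exact absurd h (not_lt.mpr (le_of_lt (sig_strict h')))
  · exact sig_strict

lemma theta_zero (n : ℕ) (b : ℤ) :
    theta n ((0:Fin (n+1)), b) = sig b / ((n:ℝ)+1) := by
  simp [theta]

/-- If a marked point `(h, c)` lies (mod 1, shifted by `j`) strictly between
`θ(0, a)` and `θ(0, a+2)`, then it must be `(0, a+1)`. -/
lemma in_arc {n : ℕ} {a : ℤ} {h : Fin (n+1)} {c j : ℤ}
    (H1 : theta n ((0 : Fin (n+1)), a) < theta n (h, c) + j)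
    (H2 : theta n (h, c) + (j:ℝ) < theta n ((0 : Fin (n+1)), a + 2)) :
    h = 0 ∧ c = a + 1 := by
  have hD : (0:ℝ) < (n:ℝ) + 1 := by positivity
  have e : theta n (h, c) + (j:ℝ) = (((h.val:ℝ) + sig c) + (j:ℝ) * ((n:ℝ)+1)) / ((n:ℝ)+1) := by
    rw [theta, div_add' _ _ _ hD.ne']
  rw [theta_zero, e, div_lt_div_iff_of_pos_right hD] at H1 H2
  set N : ℤ := (h.val : ℤ) + j * ((n:ℤ)+1) with hN
  have hNcast : ((N:ℝ)) = (h.val:ℝ) + (j:ℝ) * ((n:ℝ)+1) := by push_cast [hN]; ring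
  have hc0 := sig_pos c
  have hc1 := sig_lt_one c
  have ha0 := sig_pos a
  have ha1 := sig_lt_one (a+2)
  have hN0 : N = 0 := by
    have l1 : (-1:ℝ) < (N:ℝ) := by rw [hNcast]; nlinarith
    have l2 : ((N:ℝ)) < 1 := by rw [hNcast]; nlinarith
    have l1' : (-1:ℤ) < N := by exact_mod_cast l1
    have l2' : N < 1 := by exact_mod_cast l2
    omega
  have heq : (h.val:ℤ) + j * ((n:ℤ)+1) = 0 := hN0
  have hlt : (h.val:ℤ) < (n:ℤ)+1 := by exact_mod_cast h.isLt
  have hge : (0:ℤ) ≤ (h.val:ℤ) := by positivity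
  have hj0 : j = 0 := by
    rcases lt_trichotomy j 0 with hjl|hje|hjg
    · have h1 : j ≤ -1 := by omega
      have h2 : j * ((n:ℤ)+1) ≤ (-1) * ((n:ℤ)+1) :=
        mul_le_mul_of_nonneg_right h1 (by positivity)
      linarith
    · exact hje
    · have h1 : 1 ≤ j := hjg
      have h2 : 1 * ((n:ℤ)+1) ≤ j * ((n:ℤ)+1) :=
        mul_le_mul_of_nonneg_right h1 (by positivity)
      linarith
  have hval : (h.val:ℤ) = 0 := by rw [hj0] at heq; simpa using heq
  have hh : h = 0 := by apply Fin.ext; simp only [Fin.val_zero]; omega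
  refine ⟨hh, ?_⟩
  have hv0 : (h.val:ℝ) = 0 := by exact_mod_cast hval
  have hs1 : sig a < sig c := by
    rw [hv0, hj0] at H1; push_cast at H1; linarith
  have hs2 : sig c < sig (a+2) := by
    rw [hv0, hj0] at H2; push_cast at H2; linarith
  have := sig_lt_sig_iff.mp hs1
  have := sig_lt_sig_iff.mp hs2
  omega

/-- The short edge from `(0, a)` to `(0, a+2)`. -/
def Eshort (n : ℕ) (a : ℤ) : Edge n := ⟨((0 : Fin (n+1)), a), ((0 : Fin (n+1)), a + 2), 1⟩

/-- Any lift of the short edge uses the same integer shift at both ends. -/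
lemma Eshort_lift {n : ℕ} {a : ℤ} {x y : ℝ} (hL : IsLift (Eshort n a) x y) :
    ∃ k : ℤ, x = theta n ((0 : Fin (n+1)), a) + k ∧
      y = theta n ((0 : Fin (n+1)), a + 2) + k := by
  obtain ⟨⟨k1, hx⟩, ⟨k2, hy⟩, hxy, hyx⟩ := hL
  simp only [Eshort] at hx hy
  refine ⟨k1, hx, ?_⟩
  have hD : (0:ℝ) < (n:ℝ) + 1 := by positivity
  have hn1 : (1:ℝ) ≤ (n:ℝ) + 1 := by
    have : (0:ℝ) ≤ (n:ℝ) := by positivity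
    linarith
  have hdiff : theta n ((0:Fin (n+1)), a+2) - theta n ((0:Fin (n+1)), a)
      = (sig (a+2) - sig a) / ((n:ℝ)+1) := by
    rw [theta_zero, theta_zero, div_sub_div_same]
  have hnum0 : 0 < sig (a+2) - sig a := by
    have := sig_strict (show a < a + 2 by omega); linarith
  have hnum1 : sig (a+2) - sig a < 1 := by
    have := sig_pos a; have := sig_lt_one (a+2); linarith
  have hdpos : 0 < theta n ((0:Fin (n+1)), a+2) - theta n ((0:Fin (n+1)), a) := by
    rw [hdiff]; exact div_pos hnum0 hD
  have hdlt : theta n ((0:Fin (n+1)), a+2) - theta n ((0:Fin (n+1)), a) < 1 := by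
    rw [hdiff, div_lt_one hD]; linarith
  have hk1 : (-1:ℝ) < (k2:ℝ) - (k1:ℝ) := by
    have : x < y := hxy
    rw [hx, hy] at this; linarith
  have hk2 : ((k2:ℝ)) - (k1:ℝ) < 1 := by
    have : y < x + 1 := hyx
    rw [hx, hy] at this; linarith
  have hk1' : (-1:ℤ) < k2 - k1 := by exact_mod_cast hk1
  have hk2' : (k2:ℤ) - k1 < 1 := by exact_mod_cast hk2
  have : k2 = k1 := by omega
  rw [hy, this]

/-- If the short edge at `a` crosses `F`, then `F` has `(0, a+1)` as an endpoint. -/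
lemma crosses_endpoint {n : ℕ} {a : ℤ} {F : Edge n}
    (hC : Crosses (Eshort n a) F) :
    F.p = ((0 : Fin (n+1)), a + 1) ∨ F.q = ((0 : Fin (n+1)), a + 1) := by
  have hpq : (Eshort n a).p ≠ (Eshort n a).q := by
    simp only [Eshort, ne_eq, Prod.mk.injEq, not_and]
    intro _; omega
  rcases hC with ⟨_, _, x1, y1, x2, y2, hL1, hL2, hor⟩ | ⟨_, hF, x, y, t, hL, ⟨k, ht⟩, hxt, hty⟩
      | ⟨hEq, _, _⟩ | ⟨hEq, _, _⟩
  · obtain ⟨k, hx1, hy1⟩ := Eshort_lift hL1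
    obtain ⟨⟨kp, hx2⟩, ⟨kq, hy2⟩, _, _⟩ := hL2
    rcases hor with ⟨h1, h2, _⟩ | ⟨_, h1, h2⟩
    · -- x1 < x2 < y1 : F.p is in the arc
      left
      rw [hx1, hx2] at h1
      rw [hx2, hy1] at h2
      have H1 : theta n ((0:Fin (n+1)), a) < theta n (F.p.1, F.p.2) + ((kp - k : ℤ) : ℝ) := by
        push_cast; simp only [Prod.mk.eta]; linarith
      have H2 : theta n (F.p.1, F.p.2) + ((kp - k : ℤ) : ℝ) < theta n ((0:Fin (n+1)), a + 2) := by
        push_cast; simp only [Prod.mk.eta]; linarith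
      obtain ⟨e1, e2⟩ := in_arc H1 H2
      exact Prod.ext e1 e2
    · -- x1 < y2 < y1 : F.q is in the arc
      right
      rw [hx1, hy2] at h1
      rw [hy2, hy1] at h2
      have H1 : theta n ((0:Fin (n+1)), a) < theta n (F.q.1, F.q.2) + ((kq - k : ℤ) : ℝ) := by
        push_cast; simp only [Prod.mk.eta]; linarith
      have H2 : theta n (F.q.1, F.q.2) + ((kq - k : ℤ) : ℝ) < theta n ((0:Fin (n+1)), a + 2) := by
        push_cast; simp only [Prod.mk.eta]; linarith
      obtain ⟨e1, e2⟩ := in_arc H1 H2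
      exact Prod.ext e1 e2
  · -- F is a puncture edge whose point is in the arc
    left
    obtain ⟨k', hx, hy⟩ := Eshort_lift hL
    rw [hx, ht] at hxt
    rw [ht, hy] at hty
    have H1 : theta n ((0:Fin (n+1)), a) < theta n (F.p.1, F.p.2) + ((k - k' : ℤ) : ℝ) := by
      push_cast; simp only [Prod.mk.eta]; linarith
    have H2 : theta n (F.p.1, F.p.2) + ((k - k' : ℤ) : ℝ) < theta n ((0:Fin (n+1)), a + 2) := by
      push_cast; simp only [Prod.mk.eta]; linarith
    obtain ⟨e1, e2⟩ := in_arc H1 H2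
    exact Prod.ext e1 e2
  · exact absurd hEq hpq
  · exact absurd hEq hpq

/-- every triangulation of `P_{n+1,∞}` is infinite. -/
theorem triangulation_infinite (n : ℕ) (T : Set (Edge n)) (hT : IsTriangulation T) :
    T.Infinite := by
  obtain ⟨hTag, hNC, hMax⟩ := hT
  by_contra hInf
  have hfin : T.Finite := Set.not_infinite.mp hInf
  obtain ⟨b, hb⟩ := (hfin.image (fun E => max E.p.2 E.q.2)).bddAbove
  set a : ℤ := b + 1 with ha
  have hbound : ∀ E ∈ T, E.p.2 < a ∧ E.q.2 < a := by
    intro E hE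
    have h1 : max E.p.2 E.q.2 ≤ b := hb (Set.mem_image_of_mem _ hE)
    omega
  have hTagged : IsTagged (Eshort n a) := by
    refine ⟨?_, Or.inl rfl, fun _ => rfl⟩
    simp only [Eshort, ne_eq, Prod.mk.injEq, not_and]
    intro _; omega
  have hnotin : Eshort n a ∉ T := by
    intro hmem
    have := (hbound _ hmem).1
    simp only [Eshort] at this
    omega
  obtain ⟨F, hFT, hC⟩ := hMax _ hTagged hnotin
  rcases crosses_endpoint hC with h | h
  · have := (hbound F hFT).1; rw [h] at this; simp at this
  · have := (hbound F hFT).2; rw [h] at this; simp at this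

end PuncturedGon
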